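/- Let W ∈ ℝ^{k×d} be a matrix, y ∈ ℝ^k, β* ∈ ℝ^d, λ > 0, and set e = y − Wβ*. Let β̂ be any minimizer over β ∈ ℝ^d of the Lagrangian Lasso objective (1/(2k)) ‖y − Wβ‖_2² + λ ‖β‖_1. If λ ≥ (2/k) ‖Wᵀ e‖_∞, then (1/k) ‖W(β̂ − β*)‖_2² ≤ 12 ‖β*‖_1 λ. -/

import Mathlib

open Finset

/-- **Slow-rate prediction error bound for the (Lagrangian) Lasso.**
If `λ ≥ (2/k) ‖Wᵀ e‖_∞` where `e = y - W β*`, then any minimizer `β̂` of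
`(1/(2k)) ‖y - Wβ‖₂² + λ ‖β‖₁` satisfies `(1/k) ‖W(β̂ - β*)‖₂² ≤ 12 ‖β*‖₁ λ`. -/
theorem lasso_slow_rate_prediction_error
    {k d : ℕ} (hk : 0 < k)
    (W : Matrix (Fin k) (Fin d) ℝ) (y : Fin k → ℝ)
    (βstar : Fin d → ℝ) (lam : ℝ) (hlam : 0 < lam)
    (e : Fin k → ℝ) (he : e = y - W.mulVec βstar)
    (βhat : Fin d → ℝ)
    (hmin : ∀ β : Fin d → ℝ,
      (1 / (2 * (k : ℝ))) * ∑ i, (y i - W.mulVec βhat i) ^ 2 + lam * ∑ j, |βhat j| ≤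
      (1 / (2 * (k : ℝ))) * ∑ i, (y i - W.mulVec β i) ^ 2 + lam * ∑ j, |β j|)
    (hlarge : ∀ j, (2 / (k : ℝ)) * |W.transpose.mulVec e j| ≤ lam) :
    (1 / (k : ℝ)) * ∑ i, (W.mulVec (βhat - βstar) i) ^ 2 ≤ 12 * (∑ j, |βstar j|) * lam := by
  have hK : (0:ℝ) < (k:ℝ) := by exact_mod_cast hk
  set Δ : Fin d → ℝ := βhat - βstar with hΔ
  set g : Fin k → ℝ := W.mulVec Δ with hg
  have hpt : ∀ i, y i - W.mulVec βhat i = e i - g i := by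
    intro i
    have : g i = W.mulVec βhat i - W.mulVec βstar i := by
      simp [hg, hΔ, Matrix.mulVec_sub]
    rw [this, he]
    simp only [Pi.sub_apply]
    ring
  have hpt2 : ∀ i, y i - W.mulVec βstar i = e i := by
    intro i; rw [he]; simp
  set A := ∑ i, e i ^ 2 with hA
  set B := ∑ i, e i * g i with hB
  set C := ∑ i, g i ^ 2 with hC
  have hCnn : 0 ≤ C := Finset.sum_nonneg fun i _ => sq_nonneg _
  have hexp : ∑ i, (y i - W.mulVec βhat i) ^ 2 = A - 2 * B + C := by
    have : ∀ i, (y i - W.mulVec βhat i) ^ 2 = e i ^ 2 - 2 * (e i * g i) + g i ^ 2 := by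
      intro i; rw [hpt i]; ring
    rw [Finset.sum_congr rfl fun i _ => this i]
    rw [Finset.sum_add_distrib, Finset.sum_sub_distrib, ← Finset.mul_sum]
  have hswap : B = ∑ j, W.transpose.mulVec e j * Δ j := by
    simp only [hB, hg, Matrix.mulVec, dotProduct, Matrix.transpose_apply,
      Finset.mul_sum, Finset.sum_mul]
    rw [Finset.sum_comm]
    exact Finset.sum_congr rfl fun j _ => Finset.sum_congr rfl fun i _ => by ring
  have hBbound : B ≤ ((k:ℝ) * lam / 2) * ∑ j, |Δ j| := by
    rw [hswap, Finset.mul_sum]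
    apply Finset.sum_le_sum
    intro j _
    have h1 : W.transpose.mulVec e j * Δ j ≤ |W.transpose.mulVec e j| * |Δ j| := by
      rw [← abs_mul]; exact le_abs_self _
    have h2 : |W.transpose.mulVec e j| ≤ (k:ℝ) * lam / 2 := by
      have := hlarge j
      rw [div_mul_eq_mul_div, div_le_iff₀ hK] at this
      linarith
    nlinarith [abs_nonneg (Δ j), abs_nonneg (W.transpose.mulVec e j)]
  have htri : ∑ j, |Δ j| ≤ ∑ j, |βhat j| + ∑ j, |βstar j| := by
    rw [← Finset.sum_add_distrib]
    apply Finset.sum_le_sum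
    intro j _
    have : Δ j = βhat j - βstar j := rfl
    rw [this]
    exact abs_sub _ _
  have hSnn : 0 ≤ ∑ j, |βstar j| := Finset.sum_nonneg fun j _ => abs_nonneg _
  have hShnn : 0 ≤ ∑ j, |βhat j| := Finset.sum_nonneg fun j _ => abs_nonneg _
  have hmin' := hmin βstar
  rw [hexp] at hmin'
  simp only [hpt2] at hmin'
  rw [← hA] at hmin'
  set Ss := ∑ j, |βstar j| with hSs
  set Sh := ∑ j, |βhat j| with hSh
  have h2k : (0:ℝ) < 2 * (k:ℝ) := by linarith
  have hmin'' : C ≤ 2 * B + 2 * (k:ℝ) * lam * (Ss - Sh) := by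
    have hstep : (1 / (2 * (k:ℝ))) * C ≤ (1 / (2 * (k:ℝ))) * (2 * B) + lam * (Ss - Sh) := by
      have expand : (1 / (2 * (k:ℝ))) * (A - 2 * B + C)
          = (1 / (2 * (k:ℝ))) * A - (1 / (2 * (k:ℝ))) * (2 * B) + (1 / (2 * (k:ℝ))) * C := by
        ring
      rw [expand] at hmin'
      linarith
    have hmul := mul_le_mul_of_nonneg_left hstep h2k.le
    calc C = 2 * (k:ℝ) * ((1 / (2 * (k:ℝ))) * C) := by field_simp
      _ ≤ 2 * (k:ℝ) * ((1 / (2 * (k:ℝ))) * (2 * B) + lam * (Ss - Sh)) := hmul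
      _ = 2 * B + 2 * (k:ℝ) * lam * (Ss - Sh) := by field_simp
  have hCb : C ≤ 3 * (k:ℝ) * lam * Ss := by
    have hmul2 := mul_le_mul_of_nonneg_left htri
      (le_of_lt (by positivity : (0:ℝ) < (k:ℝ) * lam / 2))
    nlinarith [hmin'', hBbound, hmul2, mul_nonneg (mul_nonneg hK.le hlam.le) hShnn]
  rw [one_div, inv_mul_le_iff₀ hK]
  nlinarith [hCb, mul_nonneg (mul_nonneg hK.le hlam.le) hSnn]
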